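/- Let (G, X*) be a contracting self-similar action with nucleus N, limit G-space measure μ, and tile T. Then μ(T) equals the measure number meas(Γ_N) of the graph Γ_N obtained from the Moore diagram of the nucleus by replacing each label (x,y) by x; in particular μ(T) is a positive integer. Moreover μ(T) = 1 if and only if the action satisfies the open set condition. -/

import Mathlib

open MeasureTheory ENNReal

/-- A self-similar action of the group `G` over the alphabet `X`, given by the action
`g(xw) = (toFun g x) ((res g x) w)` on words: `toFun g` is the action on the first letter and
`res g x = g|_x` is the restriction. -/
structure SSA (G X : Type*) [Group G] where
  toFun : G → X → X
  res : G → X → G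
  toFun_one : ∀ x, toFun 1 x = x
  res_one : ∀ x, res 1 x = 1
  toFun_mul : ∀ g h x, toFun (g * h) x = toFun g (toFun h x)
  res_mul : ∀ g h x, res (g * h) x = res g (toFun h x) * res h x

namespace SSA

variable {G X : Type*} [Group G]

/-- Restriction of `g` along a finite word (head of the list = first letter read):
`g|_{x₁x₂…xₙ} = g|_{x₁}|_{x₂}…|_{xₙ}`. -/
def resW (S : SSA G X) : G → List X → G
  | g, [] => g
  | g, x :: v => S.resW (S.res g x) v

/-- Action of `g` on a finite word (head of the list = first letter read):
`g(xw) = g(x) (g|_x)(w)`. -/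
def actW (S : SSA G X) : G → List X → List X
  | _, [] => []
  | g, x :: v => S.toFun g x :: S.actW (S.res g x) v

/-- `N` is the nucleus of the (contracting) action: it is closed under restrictions, every
element restricts into `N` on all sufficiently long words, and it is the smallest such set. -/
def IsNucleus (S : SSA G X) (N : Finset G) : Prop :=
  (∀ g ∈ N, ∀ x : X, S.res g x ∈ N) ∧
  (∀ g : G, ∃ k : ℕ, ∀ v : List X, k ≤ v.length → S.resW g v ∈ N) ∧
  ∀ N' : Finset G, (∀ g : G, ∃ k : ℕ, ∀ v : List X, k ≤ v.length → S.resW g v ∈ N') → N ⊆ N'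

/-- There is a left-infinite path in the Moore diagram of the nucleus `N` which ends at the
vertex `h` and whose `i`-th edge is labeled `(w i, w' i)` (sequences are left-infinite,
index `0` being the rightmost letter): the vertices `q i ∈ N` satisfy
`q (i+1)|_{w i} = q i` and `q (i+1) (w i) = w' i`, with `q 0 = h`. -/
def MoorePath (S : SSA G X) (N : Finset G) (w w' : ℕ → X) (h : G) : Prop :=
  ∃ q : ℕ → G, q 0 = h ∧ (∀ i, q i ∈ N) ∧
    ∀ i : ℕ, S.res (q (i + 1)) (w i) = q i ∧ S.toFun (q (i + 1)) (w i) = w' i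

/-- The asymptotic equivalence relation on `X^{-ω} × G`: `w·g ~ w'·g'` iff there is a
left-infinite path in the Moore diagram of the nucleus labeled `(w, w')` ending at `g'g⁻¹`. -/
def AsympEquiv (S : SSA G X) (N : Finset G) (p q : (ℕ → X) × G) : Prop :=
  S.MoorePath N p.1 q.1 (q.2 * p.2⁻¹)

/-- The limit `G`-space: the quotient of `X^{-ω} × G` by the asymptotic equivalence relation. -/
def LimitGSpace (S : SSA G X) (N : Finset G) : Type _ :=
  Quot (S.AsympEquiv N)

/-- The tile `𝒯_v ⊂ J_G` for a finite word `v` (encoded as a list whose head is the rightmost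
letter): the image in the limit `G`-space of `X^{-ω}v × {1}`.  For `v = []` this is the tile `𝒯`,
the image of `X^{-ω} × {1}`. -/
def Tile (S : SSA G X) (N : Finset G) (v : List X) : Set (S.LimitGSpace N) :=
  Quot.mk (S.AsympEquiv N) ''
    {p : (ℕ → X) × G | p.2 = 1 ∧ ∀ (i : ℕ) (h : i < v.length), p.1 i = v.get ⟨i, h⟩}

/-- The translated tile `𝒯·g`: the image in the limit `G`-space of `X^{-ω} × {g}`. -/
def TileT (S : SSA G X) (N : Finset G) (g : G) : Set (S.LimitGSpace N) :=
  Quot.mk (S.AsympEquiv N) '' {p : (ℕ → X) × G | p.2 = g}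

variable [MeasurableSpace X] [MeasurableSpace G]

instance (S : SSA G X) (N : Finset G) : MeasurableSpace (S.LimitGSpace N) :=
  inferInstanceAs (MeasurableSpace (Quot (S.AsympEquiv N)))

/-- The measure `μ` on the limit `G`-space: the push-forward under the quotient map of the
product of the (uniform Bernoulli) measure `μ0` on `X^{-ω}` and the counting measure on `G`. -/
noncomputable def limitMeasure (S : SSA G X) (N : Finset G) (μ0 : Measure (ℕ → X)) :
    Measure (S.LimitGSpace N) :=
  Measure.map (Quot.mk (S.AsympEquiv N)) (μ0.prod Measure.count)

end SSA

/-- The cylinder subset of `X^{-ω}` of sequences whose last `u.length` letters spell `u`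
(head of `u` = rightmost letter). -/
def Cyl {X : Type*} (u : List X) : Set (ℕ → X) :=
  {w | ∀ (i : ℕ) (h : i < u.length), w i = u.get ⟨i, h⟩}


namespace SSA

variable {G X : Type*} [Group G]

theorem resW_nil (S : SSA G X) (g : G) : S.resW g [] = g := rfl

theorem resW_cons (S : SSA G X) (g : G) (x : X) (v : List X) :
    S.resW g (x :: v) = S.resW (S.res g x) v := rfl

theorem resW_append (S : SSA G X) (g : G) (u v : List X) :
    S.resW g (u ++ v) = S.resW (S.resW g u) v := by
  induction u generalizing g with
  | nil => rfl
  | cons x t ih => simp [resW_cons, ih]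

theorem resW_one (S : SSA G X) (v : List X) : S.resW 1 v = 1 := by
  induction v with
  | nil => rfl
  | cons x t ih => simp [resW_cons, S.res_one, ih]

theorem toFun_inv (S : SSA G X) (g : G) (x : X) : S.toFun g⁻¹ (S.toFun g x) = x := by
  have h := S.toFun_mul g⁻¹ g x
  rw [inv_mul_cancel, S.toFun_one] at h
  exact h.symm

theorem res_inv (S : SSA G X) (g : G) (x : X) :
    S.res g⁻¹ (S.toFun g x) = (S.res g x)⁻¹ := by
  have h := S.res_mul g⁻¹ g x
  rw [inv_mul_cancel, S.res_one] at h
  exact eq_inv_of_mul_eq_one_left h.symm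

end SSA

/-- The word `[w (i+m-1), …, w (i+1), w i]` of length `m`. -/
def chainWord {X : Type*} (w : ℕ → X) : ℕ → ℕ → List X
  | _, 0 => []
  | i, m + 1 => chainWord w (i + 1) m ++ [w i]

theorem chainWord_length {X : Type*} (w : ℕ → X) (i m : ℕ) :
    (chainWord w i m).length = m := by
  induction m generalizing i with
  | zero => rfl
  | succ m ih => simp [chainWord, ih]

theorem chainWord_cons {X : Type*} (w : ℕ → X) (i m : ℕ) :
    chainWord w i (m + 1) = w (i + m) :: chainWord w i m := by
  induction m generalizing i with
  | zero => rfl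
  | succ m ih =>
    show chainWord w (i+1) (m+1) ++ [w i] = w (i + (m+1)) :: (chainWord w (i+1) m ++ [w i])
    rw [ih (i+1)]
    simp only [List.cons_append, show i + 1 + m = i + (m + 1) from by omega]

theorem chainWord_congr {X : Type*} (w w' : ℕ → X) (i m : ℕ)
    (h : ∀ j, i ≤ j → j < i + m → w j = w' j) :
    chainWord w i m = chainWord w' i m := by
  induction m generalizing i with
  | zero => rfl
  | succ m ih =>
    show chainWord w (i+1) m ++ [w i] = chainWord w' (i+1) m ++ [w' i]
    rw [ih (i+1) (fun j h1 h2 => h j (by omega) (by omega)), h i (le_refl i) (by omega)]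

theorem chainWord_shift {X : Type*} (w : ℕ → X) (d i m : ℕ) :
    chainWord w (i + d) m = chainWord (fun t => w (t + d)) i m := by
  induction m generalizing i with
  | zero => rfl
  | succ m ih =>
    show chainWord w (i + d + 1) m ++ [w (i + d)] = chainWord (fun t => w (t+d)) (i+1) m ++ [w (i+d)]
    rw [show i + d + 1 = (i+1) + d by omega, ih (i+1)]

theorem chainWord_split {X : Type*} (w : ℕ → X) (p q : ℕ) :
    chainWord w 0 (p + q) = chainWord w q p ++ chainWord w 0 q := by
  induction p with
  | zero => simp [chainWord]
  | succ p ih =>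
    rw [show p + 1 + q = (p + q) + 1 by omega, chainWord_cons, ih, chainWord_cons]
    simp only [List.cons_append, show 0 + (p + q) = q + p from by omega]

theorem chainWord_get {X : Type*} (w : ℕ → X) (i m t : ℕ) (ht : t < m) :
    (chainWord w i m).get ⟨t, by rw [chainWord_length]; exact ht⟩ = w (i + m - 1 - t) := by
  induction m generalizing i t with
  | zero => omega
  | succ m ih =>
    rw [List.get_of_eq (chainWord_cons w i m)]
    cases t with
    | zero => simp
    | succ t =>
      have ht' : t < m := by omega
      have := ih i t ht'
      simp only [List.get_cons_succ]
      rw [List.get_of_eq rfl]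
      convert this using 2
      omega

namespace SSA

variable {G X : Type*} [Group G]

theorem chain_resW (S : SSA G X) (q : ℕ → G) (w : ℕ → X)
    (hstep : ∀ i, S.res (q (i + 1)) (w i) = q i) :
    ∀ m i, S.resW (q (i + m)) (chainWord w i m) = q i := by
  intro m
  induction m with
  | zero => intro i; rfl
  | succ m ih =>
    intro i
    show S.resW (q (i + (m+1))) (chainWord w (i+1) m ++ [w i]) = q i
    rw [S.resW_append, show i + (m+1) = (i+1) + m by omega, ih (i+1)]
    show S.resW (S.res (q (i+1)) (w i)) [] = q i
    rw [resW_nil, hstep i]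

variable {S : SSA G X} {N : Finset G}

theorem IsNucleus.one_mem [Nonempty X] (hN : S.IsNucleus N) : (1 : G) ∈ N := by
  obtain ⟨k, hk⟩ := hN.2.1 1
  have := hk (List.replicate k (Classical.arbitrary X)) (by simp)
  rwa [S.resW_one] at this

theorem IsNucleus.resW_mem (hN : S.IsNucleus N) (g : G) (hg : g ∈ N) (v : List X) :
    S.resW g v ∈ N := by
  induction v generalizing g with
  | nil => exact hg
  | cons x t ih => exact ih _ (hN.1 g hg x)

theorem IsNucleus.uniform (hN : S.IsNucleus N) (F : Finset G) :
    ∃ k : ℕ, ∀ g ∈ F, ∀ v : List X, k ≤ v.length → S.resW g v ∈ N := by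
  have h : ∀ g : G, ∃ k : ℕ, ∀ v : List X, k ≤ v.length → S.resW g v ∈ N := hN.2.1
  choose kf hkf using h
  refine ⟨F.sup kf, fun g hg v hv => hkf g v (le_trans (Finset.le_sup hg) hv)⟩

theorem IsNucleus.path_mem (hN : S.IsNucleus N) (F : Finset G) (q : ℕ → G) (w : ℕ → X)
    (hstep : ∀ i, S.res (q (i + 1)) (w i) = q i) (hmem : ∀ i, q i ∈ F) :
    ∀ i, q i ∈ N := by
  obtain ⟨K, hK⟩ := hN.uniform F
  intro i
  rw [← S.chain_resW q w hstep K i]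
  exact hK _ (hmem _) _ (by rw [chainWord_length])

end SSA

namespace SSA

variable {G X : Type*} [Group G] {S : SSA G X} {N : Finset G}

theorem moorePath_refl [Nonempty X] (hN : S.IsNucleus N) (w : ℕ → X) :
    S.MoorePath N w w 1 :=
  ⟨fun _ => 1, rfl, fun _ => hN.one_mem, fun i => ⟨S.res_one (w i), S.toFun_one (w i)⟩⟩

theorem moorePath_symm (hN : S.IsNucleus N) {w w' : ℕ → X} {h : G}
    (hp : S.MoorePath N w w' h) : S.MoorePath N w' w h⁻¹ := by
  obtain ⟨q, hq0, hqN, hqs⟩ := hp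
  have hstep : ∀ i, S.res ((q (i+1))⁻¹) (w' i) = (q i)⁻¹ := by
    intro i
    rw [← (hqs i).2, S.res_inv, (hqs i).1]
  have htf : ∀ i, S.toFun ((q (i+1))⁻¹) (w' i) = w i := by
    intro i
    rw [← (hqs i).2, S.toFun_inv]
  classical
  refine ⟨fun i => (q i)⁻¹, by simp [hq0], ?_, fun i => ⟨hstep i, htf i⟩⟩
  exact hN.path_mem (N.image (·⁻¹)) _ w' hstep
    (fun i => Finset.mem_image.2 ⟨q i, hqN i, rfl⟩)

theorem moorePath_trans (hN : S.IsNucleus N) {w w' w'' : ℕ → X} {h1 h2 : G}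
    (hp : S.MoorePath N w w' h1) (hp' : S.MoorePath N w' w'' h2) :
    S.MoorePath N w w'' (h2 * h1) := by
  obtain ⟨q, hq0, hqN, hqs⟩ := hp
  obtain ⟨r, hr0, hrN, hrs⟩ := hp'
  have hstep : ∀ i, S.res (r (i+1) * q (i+1)) (w i) = r i * q i := by
    intro i
    rw [S.res_mul, (hqs i).2, (hqs i).1, (hrs i).1]
  have htf : ∀ i, S.toFun (r (i+1) * q (i+1)) (w i) = w'' i := by
    intro i
    rw [S.toFun_mul, (hqs i).2, (hrs i).2]
  classical
  refine ⟨fun i => r i * q i, by simp [hq0, hr0], ?_, fun i => ⟨hstep i, htf i⟩⟩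
  exact hN.path_mem (Finset.image₂ (· * ·) N N) _ w hstep
    (fun i => Finset.mem_image₂.2 ⟨r i, hrN i, q i, hqN i, rfl⟩)

theorem asympEquiv_equivalence [Nonempty X] (hN : S.IsNucleus N) :
    Equivalence (S.AsympEquiv N) := by
  constructor
  · intro p
    show S.MoorePath N p.1 p.1 (p.2 * p.2⁻¹)
    rw [mul_inv_cancel]
    exact moorePath_refl hN p.1
  · intro p q hpq
    show S.MoorePath N q.1 p.1 (p.2 * q.2⁻¹)
    have := moorePath_symm hN hpq
    rwa [mul_inv_rev, inv_inv] at this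
  · intro p q r hpq hqr
    show S.MoorePath N p.1 r.1 (r.2 * p.2⁻¹)
    have := moorePath_trans hN hpq hqr
    rwa [mul_assoc, inv_mul_cancel_left] at this

/-- The set `F_h` of sequences which are labels of an infinite path ending at `h`. -/
def Fset (S : SSA G X) (N : Finset G) (h : G) : Set (ℕ → X) :=
  {w : ℕ → X | ∃ q : ℕ → G, q 0 = h ∧ (∀ i, q i ∈ N) ∧
    ∀ i : ℕ, S.res (q (i + 1)) (w i) = q i}

theorem sat_eq [Nonempty X] (hN : S.IsNucleus N) :
    (Quot.mk (S.AsympEquiv N)) ⁻¹' (Quot.mk (S.AsympEquiv N) ''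
      {p : (ℕ → X) × G | p.2 = 1}) =
    ⋃ h ∈ N, (S.Fset N h) ×ˢ ({h⁻¹} : Set G) := by
  ext x
  simp only [Set.mem_preimage, Set.mem_image, Set.mem_setOf_eq, Set.mem_iUnion,
    Set.mem_prod, Set.mem_singleton_iff]
  constructor
  · rintro ⟨p, hp1, hp2⟩
    have heq : S.AsympEquiv N x p :=
      ((asympEquiv_equivalence hN).eqvGen_iff).1 (Quot.eq.1 hp2.symm)
    obtain ⟨q, hq0, hqN, hqs⟩ := heq
    rw [hp1] at hq0
    refine ⟨x.2⁻¹, ?_, ⟨q, by rw [hq0]; group, hqN, fun i => (hqs i).1⟩, by rw [inv_inv]⟩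
    · have := hqN 0
      rwa [hq0, show (1 : G) * x.2⁻¹ = x.2⁻¹ by group] at this
  · rintro ⟨h, hhN, ⟨q, hq0, hqN, hqs⟩, hx2⟩
    set w' : ℕ → X := fun i => S.toFun (q (i + 1)) (x.1 i) with hw'
    have hpath : S.AsympEquiv N x (w', 1) := by
      show S.MoorePath N x.1 w' (1 * x.2⁻¹)
      refine ⟨q, ?_, hqN, fun i => ⟨hqs i, rfl⟩⟩
      rw [hq0, hx2]
      group
    exact ⟨(w', 1), rfl, Quot.eq.2 (((asympEquiv_equivalence hN).eqvGen_iff).2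
      ((asympEquiv_equivalence hN).symm hpath))⟩

end SSA
theorem Cyl_nil {X : Type*} : Cyl ([] : List X) = Set.univ := by
  ext w; simp [Cyl]

theorem Cyl_one {X : Type*} (b : X) : Cyl [b] = {w : ℕ → X | w 0 = b} := by
  ext w
  constructor
  · intro h; exact h 0 (by simp)
  · intro h i hi
    have : i = 0 := by simpa using hi
    subst this
    exact h

section Discrete

variable {X : Type*} [MeasurableSpace X]

/-- The measurable atom of a point. -/
def matom (a : X) : Set X := ⋂₀ {S : Set X | MeasurableSet S ∧ a ∈ S}

theorem matom_measurable [Finite X] (a : X) : MeasurableSet (matom a) :=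
  MeasurableSet.sInter ((Set.toFinite _).countable) (fun _ hS => hS.1)

theorem mem_matom_self (a : X) : a ∈ matom a :=
  Set.mem_sInter.2 fun _ hS => hS.2

theorem matom_symm {a b : X} (hb : b ∈ matom a) : a ∈ matom b :=
  Set.mem_sInter.2 (by
    rintro S ⟨hS, hbS⟩
    by_contra ha
    exact (Set.mem_sInter.1 hb Sᶜ ⟨hS.compl, ha⟩) hbS)

theorem matom_mem_iff {a b : X} (hb : b ∈ matom a) {S : Set X} (hS : MeasurableSet S) :
    a ∈ S ↔ b ∈ S :=
  ⟨fun h => Set.mem_sInter.1 hb S ⟨hS, h⟩, fun h => Set.mem_sInter.1 (matom_symm hb) S ⟨hS, h⟩⟩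

theorem swap_preimage [DecidableEq X] {a b : X} (hb : b ∈ matom a) {T : Set X}
    (hT : MeasurableSet T) : (fun x => Equiv.swap a b x) ⁻¹' T = T := by
  ext x
  simp only [Set.mem_preimage]
  rcases eq_or_ne x a with rfl | hxa
  · rw [Equiv.swap_apply_left]; exact (matom_mem_iff hb hT).symm
  rcases eq_or_ne x b with rfl | hxb
  · rw [Equiv.swap_apply_right]; exact matom_mem_iff hb hT
  · rw [Equiv.swap_apply_of_ne_of_ne hxa hxb]

theorem rho_invariant [DecidableEq X] {a b : X} (hb : b ∈ matom a) :
    ∀ S : Set (ℕ → X), MeasurableSet S →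
      (fun w : ℕ → X => Function.update w 0 (Equiv.swap a b (w 0))) ⁻¹' S = S := by
  set ρ : (ℕ → X) → (ℕ → X) := fun w => Function.update w 0 (Equiv.swap a b (w 0)) with hρ
  let m' : MeasurableSpace (ℕ → X) :=
    { MeasurableSet' := fun S => ρ ⁻¹' S = S
      measurableSet_empty := by simp
      measurableSet_compl := fun s hs => by
        show ρ ⁻¹' sᶜ = sᶜ
        rw [Set.preimage_compl]
        exact congrArg _ hs
      measurableSet_iUnion := fun f hf => by
        show ρ ⁻¹' (⋃ i, f i) = ⋃ i, f i
        rw [Set.preimage_iUnion]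
        exact Set.iUnion_congr hf }
  have hle : (MeasurableSpace.pi : MeasurableSpace (ℕ → X)) ≤ m' := by
    rw [MeasurableSpace.pi]
    refine iSup_le fun i => ?_
    intro s hs
    obtain ⟨T, hT, rfl⟩ := hs
    show ρ ⁻¹' ((fun w : ℕ → X => w i) ⁻¹' T) = _
    cases i with
    | zero =>
      ext w
      simp only [Set.mem_preimage, hρ, Function.update_self]
      have := swap_preimage hb hT
      constructor
      · intro h
        have : Equiv.swap a b (w 0) ∈ T := h
        rwa [← Set.mem_preimage, swap_preimage hb hT] at this
      · intro h
        show Equiv.swap a b (w 0) ∈ T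
        rw [← Set.mem_preimage (f := fun x => Equiv.swap a b x), swap_preimage hb hT]
        exact h
    | succ j =>
      ext w
      simp only [Set.mem_preimage, hρ, Function.update_of_ne (Nat.succ_ne_zero j)]
  exact fun S hS => hle S hS

variable [Fintype X] [Nonempty X]

theorem singleton_measurable (μ0 : MeasureTheory.Measure (ℕ → X))
    (hμ0 : ∀ u : List X, μ0 (Cyl u) = ((Fintype.card X : ℝ≥0∞))⁻¹ ^ u.length) (a : X) :
    MeasurableSet ({a} : Set X) := by
  classical
  set n := Fintype.card X with hn
  have hnpos : 0 < n := Fintype.card_pos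
  set q : ℝ≥0∞ := ((n : ℝ≥0∞))⁻¹ with hq
  have hnq : (n : ℝ≥0∞) * q = 1 :=
    ENNReal.mul_inv_cancel (by exact_mod_cast hnpos.ne') (ENNReal.natCast_ne_top n)
  have huniv : μ0 Set.univ = 1 := by
    have := hμ0 []
    rwa [Cyl_nil, List.length_nil, pow_zero] at this
  -- the key upper bound
  have key1 : ∀ b : X, μ0 ((fun w : ℕ → X => w 0) ⁻¹' matom b) ≤ q := by
    intro b
    have hcover : ∀ t : Set (ℕ → X), MeasurableSet t → Cyl [b] ⊆ t →
        (fun w : ℕ → X => w 0) ⁻¹' matom b ⊆ t := by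
      intro t ht hsub w hw
      have hw0 : w 0 ∈ matom b := hw
      have hinv := rho_invariant hw0 t ht
      rw [← hinv]
      show Function.update w 0 (Equiv.swap b (w 0) (w 0)) ∈ t
      apply hsub
      rw [Cyl_one]
      show Function.update w 0 (Equiv.swap b (w 0) (w 0)) 0 = b
      rw [Function.update_self, Equiv.swap_apply_right]
    have hb := hμ0 [b]
    rw [List.length_singleton, pow_one] at hb
    calc μ0 ((fun w : ℕ → X => w 0) ⁻¹' matom b)
        ≤ ⨅ (t : Set (ℕ → X)) (_ : Cyl [b] ⊆ t) (_ : MeasurableSet t), μ0 t := by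
          refine le_iInf fun t => le_iInf fun hst => le_iInf fun ht =>
            MeasureTheory.measure_mono (hcover t ht hst)
      _ = μ0 (Cyl [b]) := (MeasureTheory.measure_eq_iInf _).symm
      _ = q := hb
  -- every atom is a singleton
  have key2 : ∀ b c : X, c ∈ matom b → c = b := by
    intro b c hc
    by_contra hcb
    set A := matom b with hA
    have hAm : MeasurableSet A := matom_measurable b
    set E : Set (ℕ → X) := (fun w : ℕ → X => w 0) ⁻¹' A with hE
    have hEm : MeasurableSet E := (measurable_pi_apply 0) hAm
    have hsplit : μ0 E + μ0 Eᶜ = 1 := by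
      rw [MeasureTheory.measure_add_measure_compl hEm, huniv]
    set K : Finset X := Finset.univ.filter (fun x => x ∉ A) with hK
    have hcomplsub : Eᶜ ⊆ ⋃ x ∈ K, (fun w : ℕ → X => w 0) ⁻¹' matom x := by
      intro w hw
      simp only [hE, Set.mem_compl_iff, Set.mem_preimage] at hw
      exact Set.mem_biUnion (Finset.mem_filter.2 ⟨Finset.mem_univ _, hw⟩) (mem_matom_self (w 0))
    have hcompl : μ0 Eᶜ ≤ (K.card : ℝ≥0∞) * q := by
      calc μ0 Eᶜ ≤ ∑ x ∈ K, μ0 ((fun w : ℕ → X => w 0) ⁻¹' matom x) :=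
            le_trans (MeasureTheory.measure_mono hcomplsub)
              (MeasureTheory.measure_biUnion_finset_le K _)
        _ ≤ ∑ _x ∈ K, q := Finset.sum_le_sum (fun x _ => key1 x)
        _ = (K.card : ℝ≥0∞) * q := by rw [Finset.sum_const, nsmul_eq_mul]
    have hKcard : K.card + 2 ≤ n := by
      have hsub2 : ({b, c} : Finset X) ⊆ Finset.univ.filter (fun x => x ∈ A) := by
        intro x hx
        simp only [Finset.mem_insert, Finset.mem_singleton] at hx
        rcases hx with rfl | rfl
        · exact Finset.mem_filter.2 ⟨Finset.mem_univ _, mem_matom_self _⟩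
        · exact Finset.mem_filter.2 ⟨Finset.mem_univ _, hc⟩
      have h2 : 2 ≤ (Finset.univ.filter (fun x => x ∈ A)).card := by
        have := Finset.card_le_card hsub2
        rwa [Finset.card_insert_of_notMem (by simpa using (fun h => hcb h.symm)),
          Finset.card_singleton] at this
      have hKeq : K = Finset.univ \ (Finset.univ.filter (fun x => x ∈ A)) := by
        rw [hK, Finset.filter_not]
      have hKcard' : K.card = n - (Finset.univ.filter (fun x => x ∈ A)).card := by
        rw [hKeq, Finset.card_sdiff_of_subset (Finset.filter_subset _ _), Finset.card_univ]
      have hle : (Finset.univ.filter (fun x => x ∈ A)).card ≤ n := by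
        calc (Finset.univ.filter (fun x => x ∈ A)).card ≤ (Finset.univ : Finset X).card :=
              Finset.card_filter_le _ _
          _ = n := Finset.card_univ
      omega
    -- 1 ≤ q + K.card * q ≤ (n-1) * q, contradiction
    have hone : (1 : ℝ≥0∞) ≤ ((n - 1 : ℕ) : ℝ≥0∞) * q := by
      calc (1 : ℝ≥0∞) = μ0 E + μ0 Eᶜ := hsplit.symm
        _ ≤ q + (K.card : ℝ≥0∞) * q := add_le_add (key1 b) hcompl
        _ = ((K.card + 1 : ℕ) : ℝ≥0∞) * q := by push_cast; ring
        _ ≤ ((n - 1 : ℕ) : ℝ≥0∞) * q := by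
            exact mul_le_mul_left (Nat.cast_le.2 (by omega)) q
    have : (n : ℝ≥0∞) ≤ ((n - 1 : ℕ) : ℝ≥0∞) := by
      calc (n : ℝ≥0∞) = (n : ℝ≥0∞) * 1 := (mul_one _).symm
        _ ≤ (n : ℝ≥0∞) * (((n - 1 : ℕ) : ℝ≥0∞) * q) := mul_le_mul_right hone _
        _ = ((n - 1 : ℕ) : ℝ≥0∞) * ((n : ℝ≥0∞) * q) := by ring
        _ = ((n - 1 : ℕ) : ℝ≥0∞) := by rw [hnq, mul_one]
    have : n ≤ n - 1 := Nat.cast_le.1 this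
    omega
  have : matom a = {a} := by
    apply Set.eq_singleton_iff_unique_mem.2
    exact ⟨mem_matom_self a, fun c hc => key2 a c hc⟩
  rw [← this]
  exact matom_measurable a

end Discrete
namespace SSA

variable {G X : Type*} [Group G] {S : SSA G X} {N : Finset G}

/-- The set of sequences admitting a length-`m` path ending at `h`. -/
def Eset (S : SSA G X) (N : Finset G) (h : G) (m : ℕ) : Set (ℕ → X) :=
  {w : ℕ → X | ∃ g ∈ N, S.resW g (chainWord w 0 m) = h}

theorem koenig (hN : S.IsNucleus N) (w : ℕ → X) (h : G)
    (H : ∀ m : ℕ, ∃ g ∈ N, S.resW g (chainWord w 0 m) = h) :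
    w ∈ S.Fset N h := by
  classical
  set D : ℕ → ℕ → Finset G := fun n m => N.image (fun g => S.resW g (chainWord w n m)) with hD
  have hDsub : ∀ n m, D n m ⊆ N := by
    intro n m g hg
    obtain ⟨g', hg', rfl⟩ := Finset.mem_image.1 hg
    exact hN.resW_mem _ hg' _
  have hstepim : ∀ n m, D n (m + 1) = (D (n + 1) m).image (fun g => S.res g (w n)) := by
    intro n m
    show N.image (fun g => S.resW g (chainWord w (n+1) m ++ [w n])) = _
    rw [Finset.image_image]
    refine Finset.image_congr ?_
    intro g _
    show S.resW g (chainWord w (n+1) m ++ [w n]) = S.res (S.resW g (chainWord w (n+1) m)) (w n)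
    rw [S.resW_append]
    rfl
  have hanti : ∀ n m, D n (m + 1) ⊆ D n m := by
    intro n m g hg
    obtain ⟨g', hg', rfl⟩ := Finset.mem_image.1 hg
    rw [chainWord_cons, S.resW_cons]
    exact Finset.mem_image.2 ⟨S.res g' (w (n + m)), hN.1 _ hg' _, rfl⟩
  have hanti' : ∀ n m m', m ≤ m' → D n m' ⊆ D n m := by
    intro n m m' hm
    induction m' with
    | zero => rw [Nat.le_zero.1 hm]
    | succ k ih =>
      rcases Nat.lt_or_ge m (k+1) with hlt | hge
      · exact (hanti n k).trans (ih (by omega))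
      · rw [Nat.le_antisymm hm hge]
  have hstab : ∀ n, ∃ m0, ∀ m, m0 ≤ m → D n m = D n m0 := by
    intro n
    obtain ⟨m0, hm0⟩ : ∃ m0, ∀ m, (D n m0).card ≤ (D n m).card := by
      have hne : (Set.range fun m => (D n m).card).Nonempty := ⟨_, ⟨0, rfl⟩⟩
      obtain ⟨m0, hm0⟩ := Nat.sInf_mem hne
      exact ⟨m0, fun m => le_trans (le_of_eq hm0) (Nat.sInf_le ⟨m, rfl⟩)⟩
    exact ⟨m0, fun m hm => Finset.eq_of_subset_of_card_le (hanti' n m0 m hm) (hm0 m)⟩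
  choose M hM using hstab
  have hstep : ∀ n g, g ∈ D n (M n) → ∃ g', g' ∈ D (n + 1) (M (n + 1)) ∧ S.res g' (w n) = g := by
    intro n g hg
    set m := max (M n) (M (n + 1)) with hm
    have h1 : D n (m + 1) = D n (M n) := hM n (m + 1) (by omega)
    have h2 : D (n + 1) m = D (n + 1) (M (n + 1)) := hM (n + 1) m (le_max_right _ _)
    rw [← h1, hstepim n m] at hg
    obtain ⟨g', hg', hres⟩ := Finset.mem_image.1 hg
    exact ⟨g', h2 ▸ hg', hres⟩
  have h0 : h ∈ D 0 (M 0) := by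
    obtain ⟨g, hg, hres⟩ := H (M 0)
    exact Finset.mem_image.2 ⟨g, hg, hres⟩
  choose f hf1 hf2 using hstep
  let Q : ∀ n : ℕ, {g : G // g ∈ D n (M n)} := fun n =>
    Nat.rec ⟨h, h0⟩ (fun n p => ⟨f n p.1 p.2, hf1 n p.1 p.2⟩) n
  refine ⟨fun n => (Q n).1, rfl, fun i => hDsub i (M i) (Q i).2, fun i => hf2 i (Q i).1 (Q i).2⟩

theorem Fset_eq_iInter (hN : S.IsNucleus N) (h : G) :
    S.Fset N h = ⋂ m, S.Eset N h m := by
  ext w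
  simp only [Set.mem_iInter]
  constructor
  · rintro ⟨q, hq0, hqN, hqs⟩ m
    exact ⟨q m, hqN m, by rw [show q m = q (0 + m) by rw [Nat.zero_add],
      S.chain_resW q w hqs m 0, hq0]⟩
  · exact koenig hN w h

theorem Eset_antitone (hN : S.IsNucleus N) (h : G) (m : ℕ) :
    S.Eset N h (m + 1) ⊆ S.Eset N h m := by
  rintro w ⟨g, hg, hres⟩
  rw [chainWord_cons, S.resW_cons] at hres
  exact ⟨S.res g (w (0 + m)), hN.1 _ hg _, hres⟩

end SSA

section Meas

variable {G X : Type*} [Group G] [Fintype X] [Nonempty X] [MeasurableSpace X]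
  [MeasurableSingletonClass X]

/-- Extend a finite word to an infinite sequence. -/
noncomputable def pad {X : Type*} [Nonempty X] (m : ℕ) (v : Fin m → X) : ℕ → X :=
  fun i => if h : i < m then v ⟨i, h⟩ else Classical.arbitrary X

theorem chainWord_pad {X : Type*} [Nonempty X] (w : ℕ → X) (m : ℕ) :
    chainWord w 0 m = chainWord (pad m (fun i : Fin m => w i)) 0 m := by
  refine chainWord_congr _ _ 0 m (fun j _ hj => ?_)
  rw [pad, dif_pos (by omega : j < m)]

theorem measurableSet_pi_fintype {m : ℕ} (V : Set (Fin m → X)) : MeasurableSet V := by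
  have hsing : ∀ v : Fin m → X, MeasurableSet ({v} : Set (Fin m → X)) := by
    intro v
    have : ({v} : Set (Fin m → X)) = ⋂ i, (fun u : Fin m → X => u i) ⁻¹' {v i} := by
      ext u
      simp [funext_iff]
    rw [this]
    exact MeasurableSet.iInter fun i => (measurable_pi_apply i) (measurableSet_singleton _)
  have : V = ⋃ v ∈ V.toFinite.toFinset, ({v} : Set (Fin m → X)) := by
    simp
  rw [this]
  exact (V.toFinite.toFinset : Finset (Fin m → X)).measurableSet_biUnion (fun v _ => hsing v)

theorem restr_measurable (m : ℕ) :
    Measurable (fun (w : ℕ → X) (i : Fin m) => w i) :=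
  measurable_pi_lambda _ (fun i => measurable_pi_apply (i : ℕ))

theorem restr_preimage_singleton (m : ℕ) (v : Fin m → X) :
    (fun (w : ℕ → X) (i : Fin m) => w i) ⁻¹' {v} = Cyl (List.ofFn v) := by
  ext w
  simp only [Set.mem_preimage, Set.mem_singleton_iff, Cyl, Set.mem_setOf_eq, funext_iff]
  constructor
  · intro hw i hi
    rw [List.get_ofFn]
    simpa using hw ⟨i, by simpa using hi⟩
  · intro hw i
    have h1 := hw (i : ℕ) (by simpa using i.2)
    rw [List.get_ofFn] at h1
    simpa using h1
end Meas

namespace SSA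

variable {G X : Type*} [Group G] [Fintype X] [Nonempty X] [MeasurableSpace X]
  [MeasurableSingletonClass X] {S : SSA G X} {N : Finset G}

/-- The vertex set reachable from `N` reading the finite word `v`. -/
noncomputable def VF (S : SSA G X) (N : Finset G) {m : ℕ} (v : Fin m → X) : Finset G := by
  classical exact N.image (fun g => S.resW g (chainWord (pad m v) 0 m))

theorem Eset_eq_preimage (S : SSA G X) (N : Finset G) (h : G) (m : ℕ) :
    S.Eset N h m = (fun (w : ℕ → X) (i : Fin m) => w i) ⁻¹' {v : Fin m → X | h ∈ S.VF N v} := by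
  classical
  ext w
  simp only [Eset, Set.mem_setOf_eq, Set.mem_preimage, VF, Finset.mem_image]
  constructor
  · rintro ⟨g, hg, hres⟩
    exact ⟨g, hg, by rw [← chainWord_pad]; exact hres⟩
  · rintro ⟨g, hg, hres⟩
    exact ⟨g, hg, by rw [chainWord_pad]; exact hres⟩

theorem Eset_measurable (S : SSA G X) (N : Finset G) (h : G) (m : ℕ) :
    MeasurableSet (S.Eset N h m) := by
  rw [Eset_eq_preimage]
  exact restr_measurable m (measurableSet_pi_fintype _)

theorem Eset_measure (S : SSA G X) (N : Finset G) (h : G) (m : ℕ)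
    (μ0 : MeasureTheory.Measure (ℕ → X))
    (hμ0 : ∀ u : List X, μ0 (Cyl u) = ((Fintype.card X : ℝ≥0∞))⁻¹ ^ u.length) :
    μ0 (S.Eset N h m) = (({v : Fin m → X | h ∈ S.VF N v}.toFinite.toFinset).card) *
      ((Fintype.card X : ℝ≥0∞))⁻¹ ^ m := by
  classical
  rw [Eset_eq_preimage]
  have hset : (fun (w : ℕ → X) (i : Fin m) => w i) ⁻¹' {v : Fin m → X | h ∈ S.VF N v} =
      ⋃ v ∈ {v : Fin m → X | h ∈ S.VF N v}.toFinite.toFinset,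
        (fun (w : ℕ → X) (i : Fin m) => w i) ⁻¹' {v} := by
    rw [← Set.preimage_iUnion₂]
    congr 1
    ext v
    simp
  have hdisj : Set.PairwiseDisjoint (↑({v : Fin m → X | h ∈ S.VF N v}.toFinite.toFinset))
      (fun v => (fun (w : ℕ → X) (i : Fin m) => w i) ⁻¹' {v}) := by
    intro v _ v' _ hvv'
    refine Set.disjoint_left.2 fun {w} hw hw' => hvv' ?_
    simp only [Set.mem_preimage, Set.mem_singleton_iff] at hw hw'
    rw [← hw, ← hw']
  have hmeas : ∀ v ∈ {v : Fin m → X | h ∈ S.VF N v}.toFinite.toFinset,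
      MeasurableSet ((fun (w : ℕ → X) (i : Fin m) => w i) ⁻¹' {v}) := fun v _ =>
    restr_measurable m (measurableSet_pi_fintype _)
  rw [hset, MeasureTheory.measure_biUnion_finset hdisj hmeas]
  have hval : ∀ v ∈ {v : Fin m → X | h ∈ S.VF N v}.toFinite.toFinset,
      μ0 ((fun (w : ℕ → X) (i : Fin m) => w i) ⁻¹' {v}) =
        ((Fintype.card X : ℝ≥0∞))⁻¹ ^ m := by
    intro v _
    rw [restr_preimage_singleton, hμ0, List.length_ofFn]
  rw [Finset.sum_congr rfl hval, Finset.sum_const, nsmul_eq_mul]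

theorem sum_card_filter (S : SSA G X) (N : Finset G) (hN : S.IsNucleus N) (m : ℕ) :
    ∑ h ∈ N, (({v : Fin m → X | h ∈ S.VF N v}.toFinite.toFinset).card) =
      ∑ v : Fin m → X, (S.VF N v).card := by
  classical
  have hsub : ∀ v : Fin m → X, S.VF N v ⊆ N := by
    intro v g hg
    rw [VF] at hg
    obtain ⟨g', hg', rfl⟩ := Finset.mem_image.1 hg
    exact hN.resW_mem _ hg' _
  calc ∑ h ∈ N, (({v : Fin m → X | h ∈ S.VF N v}.toFinite.toFinset).card)
      = ∑ h ∈ N, ∑ v : Fin m → X, (if h ∈ S.VF N v then 1 else 0) := by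
        refine Finset.sum_congr rfl fun h _ => ?_
        rw [show {v : Fin m → X | h ∈ S.VF N v}.toFinite.toFinset =
          Finset.univ.filter (fun v : Fin m → X => h ∈ S.VF N v) from by ext v; simp]
        rw [Finset.card_filter]
    _ = ∑ v : Fin m → X, ∑ h ∈ N, (if h ∈ S.VF N v then 1 else 0) := Finset.sum_comm
    _ = ∑ v : Fin m → X, (N.filter (fun h => h ∈ S.VF N v)).card := by
        refine Finset.sum_congr rfl fun v _ => (Finset.card_filter _ _).symm
    _ = ∑ v : Fin m → X, (S.VF N v).card := by
        refine Finset.sum_congr rfl fun v _ => ?_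
        congr 1
        ext g
        simp only [Finset.mem_filter]
        exact ⟨fun hx => hx.2, fun hx => ⟨hsub v hx, hx⟩⟩

end SSA
namespace SSA

variable {G X : Type*} [Group G] {S : SSA G X} {N : Finset G}

theorem Vlist_append [DecidableEq G] (u v : List X) :
    N.image (fun g => S.resW g (u ++ v)) =
      (N.image (fun g => S.resW g u)).image (fun g => S.resW g v) := by
  rw [Finset.image_image]
  exact Finset.image_congr fun g _ => by rw [Function.comp_apply, S.resW_append]

theorem Vlist_prefix_subset [DecidableEq G] (hN : S.IsNucleus N) (a u : List X) :
    N.image (fun g => S.resW g (a ++ u)) ⊆ N.image (fun g => S.resW g u) := by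
  intro g hg
  obtain ⟨g', hg', rfl⟩ := Finset.mem_image.1 hg
  rw [S.resW_append]
  exact Finset.mem_image.2 ⟨S.resW g' a, hN.resW_mem _ hg' _, rfl⟩

theorem factor_card [DecidableEq G] (hN : S.IsNucleus N) {u0 : List X} {c : ℕ}
    (hu0 : (N.image (fun g => S.resW g u0)).card = c)
    (hc_le : ∀ u : List X, c ≤ (N.image (fun g => S.resW g u)).card)
    (a b : List X) : (N.image (fun g => S.resW g (a ++ (u0 ++ b)))).card = c := by
  refine le_antisymm ?_ (hc_le _)
  calc (N.image (fun g => S.resW g (a ++ (u0 ++ b)))).card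
      ≤ (N.image (fun g => S.resW g (u0 ++ b))).card :=
        Finset.card_le_card (Vlist_prefix_subset hN a (u0 ++ b))
    _ ≤ (N.image (fun g => S.resW g u0)).card := by
        rw [Vlist_append]
        exact Finset.card_image_le
    _ = c := hu0

theorem kill_list (hN : S.IsNucleus N)
    (hosc : ∀ g ∈ N, ∃ v : List X, S.resW g v = 1) :
    ∀ l : List G, (∀ g ∈ l, g ∈ N) → ∃ u : List X, ∀ g ∈ l, S.resW g u = 1 := by
  intro l
  induction l with
  | nil => exact fun _ => ⟨[], fun g hg => absurd hg List.not_mem_nil⟩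
  | cons g t ih =>
    intro hmem
    obtain ⟨u, hu⟩ := ih (fun g' hg' => hmem g' (List.mem_cons_of_mem g hg'))
    obtain ⟨v, hv⟩ := hosc (S.resW g u) (hN.resW_mem g (hmem g List.mem_cons_self) u)
    refine ⟨u ++ v, fun g' hg' => ?_⟩
    rw [S.resW_append]
    rcases List.mem_cons.1 hg' with rfl | hg'
    · exact hv
    · rw [hu g' hg', S.resW_one]

end SSA

theorem chainWord_shift' {X : Type*} (w : ℕ → X) (d m : ℕ) :
    chainWord w d m = chainWord (fun t => w (t + d)) 0 m := by
  have := chainWord_shift w d 0 m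
  rwa [Nat.zero_add] at this

theorem pad_lt {X : Type*} [Nonempty X] {m : ℕ} (v : Fin m → X) {i : ℕ} (h : i < m) :
    pad m v i = v ⟨i, h⟩ := by
  rw [pad, dif_pos h]

def splitLow {X : Type*} (k ms : ℕ) (v : Fin ((k + 1) * ms) → X) : Fin (k * ms) → X :=
  fun i => v ⟨(i : ℕ), Nat.lt_of_lt_of_le i.2 (Nat.mul_le_mul_right ms (Nat.le_succ k))⟩

def splitHigh {X : Type*} (k ms : ℕ) (v : Fin ((k + 1) * ms) → X) : Fin ms → X :=
  fun t => v ⟨k * ms + (t : ℕ), by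
    have h1 : k * ms + (t : ℕ) < k * ms + ms := Nat.add_lt_add_left t.2 _
    have h2 : k * ms + ms = (k + 1) * ms := by ring
    omega⟩

section Count

variable {X : Type*} [Fintype X] [Nonempty X]

theorem split_injective (k ms : ℕ) :
    Function.Injective (fun v : Fin ((k + 1) * ms) → X => (splitLow k ms v, splitHigh k ms v)) := by
  intro v v' hvv'
  have h1 := congrArg Prod.fst hvv'
  have h2 := congrArg Prod.snd hvv'
  simp only at h1 h2
  funext i
  rcases Nat.lt_or_ge (i : ℕ) (k * ms) with hi | hi
  · have := congrFun h1 ⟨i, hi⟩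
    simp only [splitLow] at this
    convert this using 2 <;> exact (Fin.ext rfl)
  · have hi2 : (i : ℕ) - k * ms < ms := by
      have := i.2
      have h2 : (k + 1) * ms = k * ms + ms := by ring
      omega
    have := congrFun h2 ⟨(i : ℕ) - k * ms, hi2⟩
    simp only [splitHigh] at this
    have harg : (⟨k * ms + ((i : ℕ) - k * ms), by
        have h3 : (k + 1) * ms = k * ms + ms := by ring
        omega⟩ : Fin ((k + 1) * ms)) = i :=
      Fin.ext (by show k * ms + ((i : ℕ) - k * ms) = (i : ℕ); omega)
    rwa [harg] at this

/-- The count of bad words avoiding a fixed factor `ustar` in all aligned blocks. -/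
theorem bad_count (ms : ℕ) (hms : 0 < ms) (ustar : List X) (hlen : ustar.length = ms) :
    ∀ k : ℕ,
      (({v : Fin (k * ms) → X |
          ∀ j, j < k → chainWord (pad (k * ms) v) (j * ms) ms ≠ ustar}).toFinite.toFinset).card ≤
        (Fintype.card X ^ ms - 1) ^ k := by
  classical
  intro k
  induction k with
  | zero =>
    calc _ ≤ Fintype.card (Fin (0 * ms) → X) := Finset.card_le_univ _
      _ = 1 := by simp
      _ = (Fintype.card X ^ ms - 1) ^ 0 := by rw [pow_zero]
  | succ k ih =>
    have hkn : k * ms + ms = (k + 1) * ms := by ring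
    -- the good word for the last block
    have hgood : ∃ u : Fin ms → X, chainWord (pad ms u) 0 ms = ustar := by
      have hub : ∀ t : Fin ms, ms - 1 - (t : ℕ) < ustar.length := fun t => by omega
      refine ⟨fun t => ustar.get ⟨ms - 1 - (t : ℕ), hub t⟩, ?_⟩
      refine List.ext_get (by rw [chainWord_length, hlen]) ?_
      intro t h1 h2
      have ht : t < ms := by rwa [chainWord_length] at h1
      rw [chainWord_get _ _ _ _ ht, pad_lt _ (by omega : 0 + ms - 1 - t < ms)]
      exact congrArg ustar.get (Fin.ext (show ms - 1 - (0 + ms - 1 - t) = t by omega))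
    obtain ⟨ug, hug⟩ := hgood
    set LastBad : Finset (Fin ms → X) :=
      ({u : Fin ms → X | chainWord (pad ms u) 0 ms ≠ ustar}).toFinite.toFinset with hLB
    have hLBcard : LastBad.card ≤ Fintype.card X ^ ms - 1 := by
      have hsub : LastBad ⊆ Finset.univ.erase ug := by
        intro u hu
        refine Finset.mem_erase.2 ⟨?_, Finset.mem_univ u⟩
        rintro rfl
        rw [hLB, Set.Finite.mem_toFinset, Set.mem_setOf_eq] at hu
        exact hu hug
      calc LastBad.card ≤ (Finset.univ.erase ug).card := Finset.card_le_card hsub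
        _ = Fintype.card (Fin ms → X) - 1 := by
            rw [Finset.card_erase_of_mem (Finset.mem_univ ug), Finset.card_univ]
        _ = Fintype.card X ^ ms - 1 := by rw [Fintype.card_fun]; simp
    set BadK : Finset (Fin (k * ms) → X) :=
      ({v : Fin (k * ms) → X |
        ∀ j, j < k → chainWord (pad (k * ms) v) (j * ms) ms ≠ ustar}).toFinite.toFinset with hBK
    have hmaps : ∀ v ∈ ({v : Fin ((k + 1) * ms) → X |
        ∀ j, j < k + 1 → chainWord (pad ((k + 1) * ms) v) (j * ms) ms ≠ ustar}).toFinite.toFinset,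
        (splitLow k ms v, splitHigh k ms v) ∈ BadK ×ˢ LastBad := by
      intro v hv
      rw [Set.Finite.mem_toFinset] at hv
      refine Finset.mem_product.2 ⟨?_, ?_⟩
      · rw [hBK, Set.Finite.mem_toFinset]
        intro j hj
        have heq : chainWord (pad (k * ms) (splitLow k ms v)) (j * ms) ms =
            chainWord (pad ((k + 1) * ms) v) (j * ms) ms := by
          refine chainWord_congr _ _ _ _ (fun l hl1 hl2 => ?_)
          have hlk : l < k * ms := by
            have hjk : j * ms + ms ≤ k * ms := by
              have hj1 : j + 1 ≤ k := hj
              calc j * ms + ms = (j + 1) * ms := by ring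
                _ ≤ k * ms := Nat.mul_le_mul_right ms hj1
            omega
          have hln : l < (k + 1) * ms := by omega
          rw [pad_lt _ hlk, pad_lt _ hln]
          rfl
        rw [heq]
        exact hv j (by omega)
      · rw [hLB, Set.Finite.mem_toFinset, Set.mem_setOf_eq]
        have heq : chainWord (pad ms (splitHigh k ms v)) 0 ms =
            chainWord (pad ((k + 1) * ms) v) (k * ms) ms := by
          rw [chainWord_shift' (pad ((k + 1) * ms) v) (k * ms) ms]
          refine chainWord_congr _ _ _ _ (fun l hl1 hl2 => ?_)
          have hl : l < ms := by omega
          have hln : l + k * ms < (k + 1) * ms := by omega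
          rw [pad_lt _ hl, pad_lt _ hln]
          show v _ = v _
          exact congrArg v (Fin.ext (show k * ms + l = l + k * ms by omega))
        rw [heq]
        exact hv k (by omega)
    calc (({v : Fin ((k + 1) * ms) → X |
        ∀ j, j < k + 1 → chainWord (pad ((k + 1) * ms) v) (j * ms) ms ≠ ustar}).toFinite.toFinset).card
        ≤ (BadK ×ˢ LastBad).card :=
          Finset.card_le_card_of_injOn _ hmaps (Function.Injective.injOn (split_injective k ms))
      _ = BadK.card * LastBad.card := Finset.card_product _ _
      _ ≤ (Fintype.card X ^ ms - 1) ^ k * (Fintype.card X ^ ms - 1) :=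
          Nat.mul_le_mul ih hLBcard
      _ = (Fintype.card X ^ ms - 1) ^ (k + 1) := by rw [pow_succ]

end Count
namespace SSA

open Filter Topology MeasureTheory

variable {G X : Type*} [Group G] [Fintype X] [Nonempty X] [MeasurableSpace X]
  [MeasurableSingletonClass X] {S : SSA G X} {N : Finset G}

theorem VF_eq (S : SSA G X) (N : Finset G) [DecidableEq G] (m : ℕ) (v : Fin m → X) :
    S.VF N v = N.image (fun g => S.resW g (chainWord (pad m v) 0 m)) := by
  ext g
  simp [VF, Finset.mem_image]

theorem sum_Fset (hN : S.IsNucleus N) (μ0 : Measure (ℕ → X))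
    (hμ0 : ∀ u : List X, μ0 (Cyl u) = ((Fintype.card X : ℝ≥0∞))⁻¹ ^ u.length) :
    ∃ c : ℕ, 0 < c ∧ (∑ h ∈ N, μ0 (S.Fset N h) = c) ∧
      ((c = 1) ↔ ∀ g ∈ N, ∃ v : List X, S.resW g v = 1) := by
  classical
  set q : ℝ≥0∞ := ((Fintype.card X : ℝ≥0∞))⁻¹ with hq
  have hXpos : 0 < Fintype.card X := Fintype.card_pos
  have hXne : ((Fintype.card X : ℕ) : ℝ≥0∞) ≠ 0 := by exact_mod_cast hXpos.ne'
  have hXnetop : ((Fintype.card X : ℕ) : ℝ≥0∞) ≠ ⊤ := ENNReal.natCast_ne_top _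
  have hXq : ((Fintype.card X : ℕ) : ℝ≥0∞) * q = 1 := ENNReal.mul_inv_cancel hXne hXnetop
  have h1N : (1 : G) ∈ N := hN.one_mem
  set cset : Set ℕ := {k | ∃ u : List X, (N.image (fun g => S.resW g u)).card = k} with hcset
  have hcne : cset.Nonempty := ⟨_, [], rfl⟩
  set c : ℕ := sInf cset with hc
  have hc_le : ∀ u : List X, c ≤ (N.image (fun g => S.resW g u)).card :=
    fun u => Nat.sInf_le ⟨u, rfl⟩
  obtain ⟨u0, hu0⟩ : ∃ u0 : List X, (N.image (fun g => S.resW g u0)).card = c :=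
    Nat.sInf_mem hcne
  have hc_pos : 0 < c := by
    rw [← hu0]
    exact Finset.card_pos.2 ⟨_, Finset.mem_image.2 ⟨1, h1N, rfl⟩⟩
  have hVF_le : ∀ (m : ℕ) (v : Fin m → X), c ≤ (S.VF N v).card := by
    intro m v
    rw [VF_eq]
    exact hc_le _
  refine ⟨c, hc_pos, ?_, ?_⟩
  · -- the measure computation
    set f : ℕ → ℝ≥0∞ := fun m => ∑ h ∈ N, μ0 (S.Eset N h m) with hf
    have hμuniv : μ0 Set.univ = 1 := by
      have := hμ0 []
      rwa [Cyl_nil, List.length_nil, pow_zero] at this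
    have hμfin : ∀ s : Set (ℕ → X), μ0 s ≠ ⊤ := fun s =>
      ne_top_of_le_ne_top (by rw [hμuniv]; exact ENNReal.one_ne_top)
        (measure_mono (Set.subset_univ s))
    have hTend : Tendsto f atTop (𝓝 (∑ h ∈ N, μ0 (S.Fset N h))) := by
      refine tendsto_finset_sum _ (fun h _ => ?_)
      rw [Fset_eq_iInter hN h]
      exact tendsto_measure_iInter_atTop
        (fun m => (S.Eset_measurable N h m).nullMeasurableSet)
        (antitone_nat_of_succ_le (fun m => Eset_antitone hN h m)) ⟨0, hμfin _⟩
    have hform : ∀ m, f m = ((∑ v : Fin m → X, (S.VF N v).card : ℕ) : ℝ≥0∞) * q ^ m := by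
      intro m
      show ∑ h ∈ N, μ0 (S.Eset N h m) = _
      have hterm : ∀ h ∈ N, μ0 (S.Eset N h m) =
          (({v : Fin m → X | h ∈ S.VF N v}.toFinite.toFinset).card : ℝ≥0∞) * q ^ m :=
        fun h _ => S.Eset_measure N h m μ0 hμ0
      rw [Finset.sum_congr rfl hterm, ← Finset.sum_mul]
      congr 1
      rw [← Nat.cast_sum, S.sum_card_filter N hN m]
    have hlow : ∀ m, (c : ℝ≥0∞) ≤ f m := by
      intro m
      rw [hform m]
      have hA : c * Fintype.card X ^ m ≤ ∑ v : Fin m → X, (S.VF N v).card := by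
        calc c * Fintype.card X ^ m = ∑ _v : Fin m → X, c := by
              rw [Finset.sum_const, Finset.card_univ, Fintype.card_fun, Fintype.card_fin,
                smul_eq_mul, mul_comm]
          _ ≤ ∑ v : Fin m → X, (S.VF N v).card := Finset.sum_le_sum (fun v _ => hVF_le m v)
      calc (c : ℝ≥0∞) = (c : ℝ≥0∞) * (((Fintype.card X : ℕ) : ℝ≥0∞) ^ m * q ^ m) := by
            rw [← mul_pow, hXq, one_pow, mul_one]
        _ = ((c * Fintype.card X ^ m : ℕ) : ℝ≥0∞) * q ^ m := by push_cast; ring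
        _ ≤ ((∑ v : Fin m → X, (S.VF N v).card : ℕ) : ℝ≥0∞) * q ^ m :=
            mul_le_mul_left (Nat.cast_le.2 hA) _
    -- upper bound
    set x0 : X := Classical.arbitrary X
    set ustar : List X := u0 ++ [x0] with hustar
    set ms : ℕ := ustar.length with hms
    have hms_pos : 0 < ms := by rw [hms, hustar]; simp
    have hstar : ∀ a b : List X, (N.image (fun g => S.resW g (a ++ (ustar ++ b)))).card = c := by
      intro a b
      have heq : a ++ (ustar ++ b) = a ++ (u0 ++ ([x0] ++ b)) := by simp [hustar]
      rw [heq]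
      exact factor_card hN hu0 hc_le a ([x0] ++ b)
    have hgoodcard : ∀ (m : ℕ) (v : Fin m → X),
        (∃ j, j * ms + ms ≤ m ∧ chainWord (pad m v) (j * ms) ms = ustar) →
        (S.VF N v).card = c := by
      rintro m v ⟨j, hjm, hblock⟩
      rw [VF_eq]
      set w : ℕ → X := pad m v with hw
      have hsplit1 : chainWord w 0 m =
          chainWord w (j * ms + ms) (m - (j * ms + ms)) ++
            (chainWord w (j * ms) ms ++ chainWord w 0 (j * ms)) := by
        conv_lhs => rw [show m = (m - (j * ms + ms)) + (j * ms + ms) by omega]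
        rw [chainWord_split]
        congr 1
        rw [show j * ms + ms = ms + j * ms by ring, chainWord_split]
      rw [hsplit1, hblock]
      exact hstar _ _
    have hNbound : ∀ (m : ℕ) (v : Fin m → X), (S.VF N v).card ≤ N.card := by
      intro m v
      rw [VF_eq]
      exact Finset.card_image_le
    have hup : ∀ k : ℕ, f (k * ms) ≤ (c : ℝ≥0∞) +
        (N.card : ℝ≥0∞) * (((Fintype.card X ^ ms - 1 : ℕ) : ℝ≥0∞) * q ^ ms) ^ k := by
      intro k
      rw [hform]
      set Bad : Finset (Fin (k * ms) → X) := ({v : Fin (k * ms) → X |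
        ∀ j, j < k → chainWord (pad (k * ms) v) (j * ms) ms ≠ ustar}).toFinite.toFinset with hBad
      have hsum : ∑ v : Fin (k * ms) → X, (S.VF N v).card ≤
          c * Fintype.card X ^ (k * ms) + N.card * (Fintype.card X ^ ms - 1) ^ k := by
        have hsplit : ∑ v : Fin (k * ms) → X, (S.VF N v).card =
            ∑ v ∈ Finset.univ \ Bad, (S.VF N v).card + ∑ v ∈ Bad, (S.VF N v).card :=
          (Finset.sum_sdiff (Finset.subset_univ Bad)).symm
        have hgood : ∀ v ∈ Finset.univ \ Bad, (S.VF N v).card = c := by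
          intro v hv
          have hvB : v ∉ Bad := (Finset.mem_sdiff.1 hv).2
          rw [hBad, Set.Finite.mem_toFinset, Set.mem_setOf_eq] at hvB
          push_neg at hvB
          obtain ⟨j, hj, hblock⟩ := hvB
          refine hgoodcard (k * ms) v ⟨j, ?_, hblock⟩
          calc j * ms + ms = (j + 1) * ms := by ring
            _ ≤ k * ms := Nat.mul_le_mul_right ms hj
        rw [hsplit]
        calc ∑ v ∈ Finset.univ \ Bad, (S.VF N v).card + ∑ v ∈ Bad, (S.VF N v).card
            ≤ ∑ _v ∈ Finset.univ \ Bad, c + ∑ _v ∈ Bad, N.card := by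
              refine add_le_add (Finset.sum_le_sum ?_) (Finset.sum_le_sum ?_)
              · exact fun v hv => le_of_eq (hgood v hv)
              · exact fun v _ => hNbound _ v
          _ = (Finset.univ \ Bad).card * c + Bad.card * N.card := by
              rw [Finset.sum_const, Finset.sum_const, smul_eq_mul, smul_eq_mul]
          _ ≤ Fintype.card X ^ (k * ms) * c + (Fintype.card X ^ ms - 1) ^ k * N.card := by
              refine add_le_add (Nat.mul_le_mul_right c ?_) (Nat.mul_le_mul_right N.card ?_)
              · calc (Finset.univ \ Bad).card
                    ≤ (Finset.univ : Finset (Fin (k * ms) → X)).card :=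
                      Finset.card_le_card Finset.sdiff_subset
                  _ = Fintype.card X ^ (k * ms) := by
                      rw [Finset.card_univ, Fintype.card_fun, Fintype.card_fin]
              · exact bad_count ms hms_pos ustar rfl k
          _ = c * Fintype.card X ^ (k * ms) + N.card * (Fintype.card X ^ ms - 1) ^ k := by
              ring
      calc ((∑ v : Fin (k * ms) → X, (S.VF N v).card : ℕ) : ℝ≥0∞) * q ^ (k * ms)
          ≤ ((c * Fintype.card X ^ (k * ms) +
              N.card * (Fintype.card X ^ ms - 1) ^ k : ℕ) : ℝ≥0∞) * q ^ (k * ms) :=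
            mul_le_mul_left (Nat.cast_le.2 hsum) _
        _ = (c : ℝ≥0∞) * (((Fintype.card X : ℕ) : ℝ≥0∞) ^ (k * ms) * q ^ (k * ms)) +
            (N.card : ℝ≥0∞) * (((Fintype.card X ^ ms - 1 : ℕ) : ℝ≥0∞) ^ k * q ^ (k * ms)) := by
            push_cast
            ring
        _ = (c : ℝ≥0∞) +
            (N.card : ℝ≥0∞) * (((Fintype.card X ^ ms - 1 : ℕ) : ℝ≥0∞) * q ^ ms) ^ k := by
            rw [← mul_pow, hXq, one_pow, mul_one]
            congr 2
            rw [mul_pow, ← pow_mul, Nat.mul_comm ms k]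
    have hr1 : (((Fintype.card X ^ ms - 1 : ℕ) : ℝ≥0∞) * q ^ ms) < 1 := by
      have hq_pow : q ^ ms = (((Fintype.card X ^ ms : ℕ) : ℝ≥0∞))⁻¹ := by
        rw [hq, ← ENNReal.inv_pow]
        congr 1
        push_cast
        ring
      have hPpos : 0 < Fintype.card X ^ ms := pow_pos hXpos ms
      have hPne : ((Fintype.card X ^ ms : ℕ) : ℝ≥0∞) ≠ 0 := by exact_mod_cast hPpos.ne'
      have hPnetop : ((Fintype.card X ^ ms : ℕ) : ℝ≥0∞) ≠ ⊤ := ENNReal.natCast_ne_top _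
      have hlt : ((Fintype.card X ^ ms - 1 : ℕ) : ℝ≥0∞) < ((Fintype.card X ^ ms : ℕ) : ℝ≥0∞) :=
        Nat.cast_lt.2 (by omega)
      rw [hq_pow]
      calc ((Fintype.card X ^ ms - 1 : ℕ) : ℝ≥0∞) * (((Fintype.card X ^ ms : ℕ) : ℝ≥0∞))⁻¹
          < ((Fintype.card X ^ ms : ℕ) : ℝ≥0∞) * (((Fintype.card X ^ ms : ℕ) : ℝ≥0∞))⁻¹ :=
            ENNReal.mul_lt_mul_left (ENNReal.inv_ne_zero.2 hPnetop)
              (ENNReal.inv_ne_top.2 hPne) hlt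
        _ = 1 := ENNReal.mul_inv_cancel hPne hPnetop
    have htend2 : Tendsto (fun k : ℕ => (c : ℝ≥0∞) +
        (N.card : ℝ≥0∞) * (((Fintype.card X ^ ms - 1 : ℕ) : ℝ≥0∞) * q ^ ms) ^ k) atTop
        (𝓝 ((c : ℝ≥0∞) + (N.card : ℝ≥0∞) * 0)) :=
      tendsto_const_nhds.add (ENNReal.Tendsto.const_mul
        (ENNReal.tendsto_pow_atTop_nhds_zero_of_lt_one hr1) (Or.inr (ENNReal.natCast_ne_top _)))
    have hLle : ∀ m, (∑ h ∈ N, μ0 (S.Fset N h)) ≤ f m := by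
      intro m
      refine Finset.sum_le_sum (fun h _ => measure_mono ?_)
      rw [Fset_eq_iInter hN h]
      exact Set.iInter_subset _ m
    have hub : (∑ h ∈ N, μ0 (S.Fset N h)) ≤ (c : ℝ≥0∞) := by
      have h := ge_of_tendsto' htend2 (fun k => le_trans (hLle (k * ms)) (hup k))
      rwa [mul_zero, add_zero] at h
    exact le_antisymm hub (ge_of_tendsto' hTend hlow)
  · constructor
    · intro hc1
      obtain ⟨z, hz⟩ := Finset.card_eq_one.1 (by rw [hu0, hc1])
      have h1img : (1 : G) ∈ N.image (fun g => S.resW g u0) :=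
        Finset.mem_image.2 ⟨1, h1N, S.resW_one u0⟩
      rw [hz, Finset.mem_singleton] at h1img
      intro g hg
      refine ⟨u0, ?_⟩
      have : S.resW g u0 ∈ N.image (fun g => S.resW g u0) := Finset.mem_image.2 ⟨g, hg, rfl⟩
      rw [hz, Finset.mem_singleton] at this
      rw [this, ← h1img]
    · intro hosc
      obtain ⟨u, hu⟩ := kill_list hN hosc N.toList (fun g hg => Finset.mem_toList.1 hg)
      have himg : N.image (fun g => S.resW g u) = {1} := by
        ext g'
        rw [Finset.mem_image, Finset.mem_singleton]
        constructor
        · rintro ⟨g, hg, rfl⟩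
          exact hu g (Finset.mem_toList.2 hg)
        · rintro rfl
          exact ⟨1, h1N, S.resW_one u⟩
      have hle1 : c ≤ 1 := by
        have := hc_le u
        rwa [himg, Finset.card_singleton] at this
      omega

end SSA

/-- The measure of the tile `𝒯` equals the measure number of the nucleus graph `Γ_N`
(the sum over `g ∈ N` of the uniform Bernoulli measures of the sets `F_g` of left-infinite
sequences ending at the vertex `g` of `Γ_N`); in particular `μ(𝒯)` is a positive integer, and
`μ(𝒯) = 1` iff the action satisfies the open set condition. -/
theorem stmt_13 {G X : Type*} [Group G] [Fintype X] [Nonempty X]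
    [MeasurableSpace X] [MeasurableSpace G] [MeasurableSingletonClass G] [Countable G]
    (S : SSA G X) (N : Finset G) (hN : S.IsNucleus N)
    (μ0 : Measure (ℕ → X))
    (hμ0 : ∀ u : List X, μ0 (Cyl u) = ((Fintype.card X : ℝ≥0∞))⁻¹ ^ u.length) :
    (S.limitMeasure N μ0 (S.Tile N []) =
      ∑ g ∈ N, μ0 {w : ℕ → X | ∃ q : ℕ → G, q 0 = g ∧ (∀ i, q i ∈ N) ∧
        ∀ i : ℕ, S.res (q (i + 1)) (w i) = q i}) ∧
    (∃ k : ℕ, 0 < k ∧ S.limitMeasure N μ0 (S.Tile N []) = k) ∧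
    (S.limitMeasure N μ0 (S.Tile N []) = 1 ↔ ∀ g ∈ N, ∃ v : List X, S.resW g v = 1) := by
  classical
  letI : MeasurableSingletonClass X := ⟨singleton_measurable μ0 hμ0⟩
  letI : SFinite (Measure.count : Measure G) :=
    inferInstanceAs (SFinite (Measure.sum Measure.dirac))
  have hTile : S.Tile N [] = Quot.mk (S.AsympEquiv N) '' {p : (ℕ → X) × G | p.2 = 1} := by
    rw [SSA.Tile]
    congr 1
    ext p
    simp
  have hFmeas : ∀ h : G, MeasurableSet (S.Fset N h) := fun h => by
    rw [SSA.Fset_eq_iInter hN h]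
    exact MeasurableSet.iInter fun m => S.Eset_measurable N h m
  have hSatmeas : MeasurableSet (⋃ h ∈ N, (S.Fset N h) ×ˢ ({h⁻¹} : Set G)) :=
    N.measurableSet_biUnion (fun h _ => (hFmeas h).prod (measurableSet_singleton _))
  have himgMeas : MeasurableSet (S.Tile N []) := by
    show MeasurableSet ((Quot.mk (S.AsympEquiv N)) ⁻¹' (S.Tile N []))
    rw [hTile, SSA.sat_eq hN]
    exact hSatmeas
  have hqm : @Measurable _ (S.LimitGSpace N) _ _ (Quot.mk (S.AsympEquiv N)) :=
    fun _ hs => hs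
  have hdisj : Set.PairwiseDisjoint (↑N) (fun h : G => (S.Fset N h) ×ˢ ({h⁻¹} : Set G)) := by
    intro h _ h' _ hne
    refine Set.disjoint_left.2 fun p hp hp' => hne ?_
    rw [Set.mem_prod, Set.mem_singleton_iff] at hp hp'
    exact inv_injective ((hp.2).symm.trans hp'.2)
  have hmain : S.limitMeasure N μ0 (S.Tile N []) = ∑ h ∈ N, μ0 (S.Fset N h) := by
    rw [SSA.limitMeasure, Measure.map_apply hqm himgMeas, hTile]
    show (μ0.prod Measure.count) ((Quot.mk (S.AsympEquiv N)) ⁻¹'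
      (Quot.mk (S.AsympEquiv N) '' {p : (ℕ → X) × G | p.2 = 1})) = _
    rw [SSA.sat_eq hN,
      measure_biUnion_finset hdisj (fun h _ => (hFmeas h).prod (measurableSet_singleton _))]
    refine Finset.sum_congr rfl fun h _ => ?_
    rw [Measure.prod_prod, Measure.count_singleton, mul_one]
  obtain ⟨c, hcpos, hcsum, hciff⟩ := SSA.sum_Fset hN μ0 hμ0
  refine ⟨hmain, ⟨c, hcpos, by rw [hmain, hcsum]⟩, ?_⟩
  rw [hmain, hcsum]
  rw [show ((c : ℕ) : ℝ≥0∞) = 1 ↔ (c = 1) from Nat.cast_eq_one]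
  exact hciff
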